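/- Let p ≥ 97 be a prime and fix a non-square α ∈ F_p. Consider the family of quadratic polynomials F = {X² + γ : γ ∈ F_p} ∪ {αX² + γ : γ ∈ F_p} (a family of 2p polynomials). Then the 2p sets S_f = {(x,y) ∈ F_p² : y < f(x)}, for f ∈ F, are pairwise non-isomorphic under affine transformations: for distinct f, g ∈ F there is no bijective affine map T(v) = Av + c of F_p² (with A an invertible 2×2 matrix over F_p and c ∈ F_p²) such that T(S_f) = S_g. -/

import Mathlib

open Finset

section helpers
variable {p : ℕ} [Fact p.Prime]

/-- An integer of small absolute value that is 0 mod p is 0. -/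
lemma bpf_int_zero (u : ℤ) (h : (u : ZMod p) = 0) (hb : |u| < (p : ℤ)) : u = 0 :=
  Int.eq_zero_of_abs_lt_dvd ((ZMod.intCast_zmod_eq_zero_iff_dvd u p).mp h) hb

lemma bpf_card_val_lt (M : ℕ) (hM : M ≤ p) :
    (univ.filter fun z : ZMod p => z.val < M).card = M := by
  rw [← Finset.card_range M]
  apply Finset.card_bij (fun z _ => z.val)
  · intro z hz
    simp only [mem_filter] at hz
    simpa using hz.2
  · intro z hz z' hz' h
    exact ZMod.val_injective p h
  · intro n hn
    simp only [mem_range] at hn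
    refine ⟨(n : ZMod p), ?_, ZMod.val_cast_of_lt (lt_of_lt_of_le hn hM)⟩
    simp [ZMod.val_cast_of_lt (lt_of_lt_of_le hn hM), hn]

lemma bpf_card_affine (e ρ : ZMod p) (he : e ≠ 0) (M : ℕ) (hM : M ≤ p) :
    (univ.filter fun j : ZMod p => (e * j + ρ).val < M).card = M := by
  have key : (univ.filter fun j : ZMod p => (e * j + ρ).val < M).card
      = (univ.filter fun z : ZMod p => z.val < M).card := by
    apply Finset.card_bij (fun (j : ZMod p) _ => e * j + ρ)
    · intro j hj
      simp only [mem_filter] at hj ⊢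
      exact ⟨mem_univ _, hj.2⟩
    · intro j hj j' hj' h
      have := add_right_cancel h
      exact mul_left_cancel₀ he this
    · intro z hz
      simp only [mem_filter] at hz
      refine ⟨(z - ρ) * e⁻¹, ?_, ?_⟩
      · simp only [mem_filter, mem_univ, true_and]
        have : e * ((z - ρ) * e⁻¹) + ρ = z := by field_simp; ring
        rw [this]; exact hz.2
      · field_simp; ring
  rw [key, bpf_card_val_lt M hM]

/-- A quadratic has at most 2 preimages of any point. -/
lemma bpf_quad_preimage (A B C w : ZMod p) (hA : A ≠ 0) (q : ZMod p → ZMod p)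
    (hq : ∀ z, q z = A * z ^ 2 + B * z + C) :
    (univ.filter fun z : ZMod p => q z = w).card ≤ 2 := by
  rcases (univ.filter fun z : ZMod p => q z = w).eq_empty_or_nonempty with h | ⟨z0, hz0⟩
  · simp [h]
  · simp only [mem_filter, mem_univ, true_and] at hz0
    have hsub : (univ.filter fun z : ZMod p => q z = w) ⊆ {z0, -z0 - B * A⁻¹} := by
      intro z hz
      simp only [mem_filter, mem_univ, true_and] at hz
      have hfac : (z - z0) * (A * (z + z0) + B) = 0 := by
        have h1 := hq z; have h2 := hq z0
        rw [h1] at hz; rw [h2] at hz0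
        linear_combination hz - hz0
      rcases mul_eq_zero.mp hfac with h | h
      · simp [sub_eq_zero.mp h]
      · have : z = -z0 - B * A⁻¹ := by
          have : A * z = -A * z0 - B := by linear_combination h
          field_simp
          linear_combination this
        simp [this]
    refine (Finset.card_le_card hsub).trans ?_
    refine (Finset.card_insert_le _ _).trans ?_
    simp

end helpers

section core
variable {p : ℕ} [Fact p.Prime]

lemma bpf_two_ne (hp : 97 ≤ p) : (2 : ZMod p) ≠ 0 := by
  have h2 : ((2 : ℕ) : ZMod p).val = 2 := ZMod.val_cast_of_lt (by omega)
  intro h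
  rw [show ((2:ℕ) : ZMod p) = (2 : ZMod p) by push_cast; ring, h, ZMod.val_zero] at h2
  omega

lemma bpf_four_ne (hp : 97 ≤ p) : (4 : ZMod p) ≠ 0 := by
  have h2 : ((4 : ℕ) : ZMod p).val = 4 := ZMod.val_cast_of_lt (by omega)
  intro h
  rw [show ((4:ℕ) : ZMod p) = (4 : ZMod p) by push_cast; ring, h, ZMod.val_zero] at h2
  omega

/-- Lemma R: no quadratic with nonzero leading coefficient satisfies ν(q z) ≤ ν z for all z. -/
lemma bpf_lemR (hp : 97 ≤ p) (A B C : ZMod p) (hA : A ≠ 0)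
    (q : ZMod p → ZMod p) (hq : ∀ z, q z = A * z ^ 2 + B * z + C)
    (hle : ∀ z : ZMod p, (q z).val ≤ z.val) : False := by
  have hp' : (97 : ℤ) ≤ (p : ℤ) := by exact_mod_cast hp
  have h2ne : (2 : ZMod p) ≠ 0 := bpf_two_ne hp
  -- values
  have hv0 : (q 0).val = 0 := by
    have := hle 0; rw [ZMod.val_zero] at this; omega
  have hC : C = 0 := by
    have h0 : q 0 = 0 := (ZMod.val_eq_zero _).mp hv0
    rw [hq 0] at h0; linear_combination h0
  have hm1 : (q 1).val ≤ 1 := by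
    have := hle 1; rwa [ZMod.val_one p] at this
  have hm2 : (q 2).val ≤ 2 := by
    have h := hle 2
    have : ((2:ZMod p)).val = 2 := by
      rw [show (2 : ZMod p) = ((2:ℕ) : ZMod p) by push_cast; ring]
      exact ZMod.val_cast_of_lt (by omega)
    omega
  have hm5 : (q 5).val ≤ 5 := by
    have h := hle 5
    have : ((5:ZMod p)).val = 5 := by
      rw [show (5 : ZMod p) = ((5:ℕ) : ZMod p) by push_cast; ring]
      exact ZMod.val_cast_of_lt (by omega)
    omega
  -- casts back
  have c1 : ((q 1).val : ZMod p) = A + B := by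
    rw [ZMod.natCast_val, ZMod.cast_id, hq 1, hC]; ring
  have c2 : ((q 2).val : ZMod p) = 4 * A + 2 * B := by
    rw [ZMod.natCast_val, ZMod.cast_id, hq 2, hC]; ring
  have c5 : ((q 5).val : ZMod p) = 25 * A + 5 * B := by
    rw [ZMod.natCast_val, ZMod.cast_id, hq 5, hC]; ring
  set m1 := (q 1).val
  set m2 := (q 2).val
  set m5 := (q 5).val
  have hu : ((m5 : ℤ) + 15 * m1 - 10 * m2 : ℤ) = 0 := by
    apply bpf_int_zero (p := p)
    · push_cast
      rw [c1, c2, c5]; ring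
    · rw [abs_lt]; constructor <;> [omega; omega]
  have hcases : (m1 = 0 ∧ m2 = 0) ∨ (m1 = 1 ∧ m2 = 2) := by omega
  have h2A : 2 * A = 0 := by
    rcases hcases with ⟨h1, h2⟩ | ⟨h1, h2⟩
    · have e1 : A + B = 0 := by
        rw [← c1, h1]; simp
      have e2 : 4 * A + 2 * B = 0 := by
        rw [← c2, h2]; simp
      linear_combination e2 - 2 * e1
    · have e1 : A + B = 1 := by
        rw [← c1, h1]; simp
      have e2 : 4 * A + 2 * B = 2 := by
        rw [← c2, h2]; push_cast; ring
      linear_combination e2 - 2 * e1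
  exact hA (by
    rcases mul_eq_zero.mp h2A with h | h
    · exact absurd h h2ne
    · exact h)

/-- Lemma S: no decreasing-by-at-most-2 step function can agree mod p with a
    quadratic with nonzero leading coefficient. -/
lemma bpf_lemS (hp : 97 ≤ p) (A B C : ZMod p) (hA : A ≠ 0) (h : ℕ → ℕ)
    (hcast : ∀ c : ℕ, c < p → ((h c : ℕ) : ZMod p) = A * (c : ZMod p) ^ 2 + B * (c : ZMod p) + C)
    (hmono : ∀ c : ℕ, c + 1 < p → h (c + 1) ≤ h c ∧ h c ≤ h (c + 1) + 2) : False := by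
  have hp' : (97 : ℤ) ≤ (p : ℤ) := by exact_mod_cast hp
  have h2ne : (2 : ZMod p) ≠ 0 := bpf_two_ne hp
  have H : ∀ k : ℕ, k < 10 → h (k+1) ≤ h k ∧ h k ≤ h (k+1) + 2 := fun k hk => hmono k (by omega)
  have hch0 : h 1 ≤ h 0 ∧ h 0 ≤ h 1 + 2 := H 0 (by omega)
  have hch1 : h 2 ≤ h 1 ∧ h 1 ≤ h 2 + 2 := H 1 (by omega)
  have hch2 : h 3 ≤ h 2 ∧ h 2 ≤ h 3 + 2 := H 2 (by omega)
  have hch3 : h 4 ≤ h 3 ∧ h 3 ≤ h 4 + 2 := H 3 (by omega)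
  have hch4 : h 5 ≤ h 4 ∧ h 4 ≤ h 5 + 2 := H 4 (by omega)
  have hch5 : h 6 ≤ h 5 ∧ h 5 ≤ h 6 + 2 := H 5 (by omega)
  have hch6 : h 7 ≤ h 6 ∧ h 6 ≤ h 7 + 2 := H 6 (by omega)
  have hch7 : h 8 ≤ h 7 ∧ h 7 ≤ h 8 + 2 := H 7 (by omega)
  have hch8 : h 9 ≤ h 8 ∧ h 8 ≤ h 9 + 2 := H 8 (by omega)
  have hch9 : h 10 ≤ h 9 ∧ h 9 ≤ h 10 + 2 := H 9 (by omega)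
  have e0 := hcast 0 (by omega); have e1 := hcast 1 (by omega)
  have e2 := hcast 2 (by omega); have e5 := hcast 5 (by omega)
  have e10 := hcast 10 (by omega)
  push_cast at e0 e1 e2 e5 e10
  have hu : ((h 5 : ℤ) - 6 * h 0 + 15 * h 1 - 10 * h 2 : ℤ) = 0 := by
    apply bpf_int_zero (p := p)
    · push_cast
      rw [e0, e1, e2, e5]; ring
    · rw [abs_lt]; constructor <;> omega
  have hv : ((h 10 : ℤ) - 36 * h 0 + 80 * h 1 - 45 * h 2 : ℤ) = 0 := by
    apply bpf_int_zero (p := p)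
    · push_cast
      rw [e0, e1, e2, e10]; ring
    · rw [abs_lt]; constructor <;> omega
  have hne : ¬ (h 0 + h 2 = 2 * h 1) := by
    intro heq
    have : ((h 0 : ℤ) + h 2 - 2 * h 1 : ℤ) = 0 := by omega
    have hz : (((h 0 : ℤ) + h 2 - 2 * h 1 : ℤ) : ZMod p) = 0 := by rw [this]; simp
    push_cast at hz
    rw [e0, e1, e2] at hz
    have h2A : 2 * A = 0 := by linear_combination hz
    rcases mul_eq_zero.mp h2A with hh | hh
    · exact h2ne hh
    · exact hA hh
  omega

end core

section more
variable {p : ℕ} [Fact p.Prime]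

lemma bpf_shift {P : ZMod p → Prop} (τ : ZMod p) (hτ : τ ≠ 0)
    (h : ∀ x, P x ↔ P (x + τ)) (x0 : ZMod p) (hx0 : P x0) : ∀ y, P y := by
  have hn : ∀ n : ℕ, P (x0 + (n : ZMod p) * τ) := by
    intro n
    induction n with
    | zero => simpa using hx0
    | succ k ih =>
      have hs := (h (x0 + (k : ZMod p) * τ)).mp ih
      have : x0 + ((k+1 : ℕ) : ZMod p) * τ = x0 + (k : ZMod p) * τ + τ := by
        push_cast; ring
      rw [this]; exact hs
  intro y
  have hy : y = x0 + (((y - x0) * τ⁻¹).val : ℕ) * τ := by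
    rw [ZMod.natCast_val, ZMod.cast_id]
    field_simp; ring
  rw [hy]; exact hn _

lemma bpf_neg_one_val (hp : 97 ≤ p) : (-1 : ZMod p).val = p - 1 := by
  have hm1 : ((p-1:ℕ) : ZMod p) = -1 := by
    have h0 : ((p:ℕ) : ZMod p) = 0 := ZMod.natCast_self p
    rw [Nat.cast_sub (by omega : 1 ≤ p), h0]; ring
  rw [← hm1, ZMod.val_cast_of_lt (by omega)]

/-- Case II : a ≠ 0, d ≠ 0. -/
lemma bpf_caseII (hp : 97 ≤ p) (lf lg γ₁ γ₂ a b d e c1 c2 : ZMod p)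
    (hlg0 : lg ≠ 0) (ha : a ≠ 0) (hd : d ≠ 0)
    (hstar : ∀ x j : ZMod p, j.val < (lf * x ^ 2 + γ₁).val ↔
      (d * x + e * j + c2).val < (lg * (a * x + b * j + c1) ^ 2 + γ₂).val) : False := by
  have hneg1 := bpf_neg_one_val (p := p) hp
  have key : ∀ x : ZMod p,
      (lg * (a * x - b + c1) ^ 2 + γ₂).val ≤ (d * x - e + c2).val := by
    intro x
    have h := hstar x (-1)
    rw [show d * x + e * (-1) + c2 = d * x - e + c2 by ring,
      show a * x + b * (-1) + c1 = a * x - b + c1 by ring, hneg1] at h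
    have hfx : (lf * x ^ 2 + γ₁).val < p := ZMod.val_lt _
    have hnl : ¬ (p - 1 < (lf * x ^ 2 + γ₁).val) := by omega
    exact not_lt.mp (mt h.mpr hnl)
  apply bpf_lemR hp (lg * (a * d⁻¹) ^ 2)
      (2 * lg * (a * d⁻¹) * ((a * d⁻¹) * (e - c2) - b + c1))
      (lg * ((a * d⁻¹) * (e - c2) - b + c1) ^ 2 + γ₂)
      (mul_ne_zero hlg0 (pow_ne_zero _ (mul_ne_zero ha (inv_ne_zero hd))))
      (fun z => lg * (a * ((z + e - c2) * d⁻¹) - b + c1) ^ 2 + γ₂)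
      (fun z => by field_simp; ring)
  intro z
  have h := key ((z + e - c2) * d⁻¹)
  have harg : d * ((z + e - c2) * d⁻¹) - e + c2 = z := by field_simp; ring
  rwa [harg] at h

/-- Case I' : a = 0, e ≠ 0 (then b, d ≠ 0 from det). -/
lemma bpf_caseI' (hp : 97 ≤ p) (lf lg γ₁ γ₂ b d e c1 c2 : ZMod p)
    (hlf0 : lf ≠ 0) (hd : d ≠ 0) (he : e ≠ 0)
    (hstar : ∀ x j : ZMod p, j.val < (lf * x ^ 2 + γ₁).val ↔
      (d * x + e * j + c2).val < (lg * (b * j + c1) ^ 2 + γ₂).val) : False := by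
  have hneg1 := bpf_neg_one_val (p := p) hp
  have key : ∀ j : ZMod p,
      (lf * ((-1 - e * j - c2) * d⁻¹) ^ 2 + γ₁).val ≤ j.val := by
    intro j
    have h := hstar ((-1 - e * j - c2) * d⁻¹) j
    have harg : d * ((-1 - e * j - c2) * d⁻¹) + e * j + c2 = -1 := by field_simp; ring
    rw [harg, hneg1] at h
    have hgx : (lg * (b * j + c1) ^ 2 + γ₂).val < p := ZMod.val_lt _
    have hnl : ¬ (p - 1 < (lg * (b * j + c1) ^ 2 + γ₂).val) := by omega
    exact not_lt.mp (mt h.mp hnl)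
  apply bpf_lemR hp (lf * (e * d⁻¹) ^ 2)
      (2 * lf * (-(e * d⁻¹)) * ((-1 - c2) * d⁻¹))
      (lf * ((-1 - c2) * d⁻¹) ^ 2 + γ₁)
      (mul_ne_zero hlf0 (pow_ne_zero _ (mul_ne_zero he (inv_ne_zero hd))))
      (fun j => lf * ((-1 - e * j - c2) * d⁻¹) ^ 2 + γ₁)
      (fun j => by field_simp; ring)
  exact key

end more
section more2
variable {p : ℕ} [Fact p.Prime]
open Finset

/-- Case III.1 : b = 0 (so a ≠ 0, e ≠ 0). -/
lemma bpf_caseIII1 (hp : 97 ≤ p) (α : ZMod p) (hα : ¬ IsSquare α)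
    (lf lg γ₁ γ₂ a d e c1 c2 : ZMod p)
    (hlf : lf = 1 ∨ lf = α) (hlg : lg = 1 ∨ lg = α)
    (ha : a ≠ 0) (he : e ≠ 0)
    (hstar : ∀ x j : ZMod p, j.val < (lf * x ^ 2 + γ₁).val ↔
      (d * x + e * j + c2).val < (lg * (a * x + c1) ^ 2 + γ₂).val)
    (hfg : (fun x : ZMod p => lf * x ^ 2 + γ₁) ≠ (fun x => lg * x ^ 2 + γ₂)) : False := by
  have hα0 : α ≠ 0 := fun h => hα (h ▸ ⟨0, by ring⟩)
  have hlg0 : lg ≠ 0 := by rcases hlg with rfl | rfl; exacts [one_ne_zero, hα0]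
  have h4 : (4 : ZMod p) ≠ 0 := bpf_four_ne hp
  have hfeq : ∀ x : ZMod p, lf * x ^ 2 + γ₁ = lg * (a * x + c1) ^ 2 + γ₂ := by
    intro x
    apply ZMod.val_injective
    set K := (lf * x ^ 2 + γ₁).val with hK
    set Mv := (lg * (a * x + c1) ^ 2 + γ₂).val with hMv
    have hsets : (univ.filter fun j : ZMod p => ((1 : ZMod p) * j + 0).val < K)
        = (univ.filter fun j : ZMod p => (e * j + (d * x + c2)).val < Mv) := by
      apply Finset.filter_congr
      intro j _
      rw [show (1 : ZMod p) * j + 0 = j by ring,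
        show e * j + (d * x + c2) = d * x + e * j + c2 by ring]
      exact hstar x j
    have h1 : (univ.filter fun j : ZMod p => ((1 : ZMod p) * j + 0).val < K).card = K :=
      bpf_card_affine 1 0 one_ne_zero K (le_of_lt (by rw [hK]; exact ZMod.val_lt _))
    have h2 : (univ.filter fun j : ZMod p => (e * j + (d * x + c2)).val < Mv).card = Mv :=
      bpf_card_affine e _ he Mv (le_of_lt (by rw [hMv]; exact ZMod.val_lt _))
    rw [← h1, hsets, h2]
  have hc1 : c1 = 0 := by
    have e1 := hfeq 1
    have e2 := hfeq (-1)
    have h40 : lg * (4 * (a * c1)) = 0 := by linear_combination e2 - e1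
    rcases mul_eq_zero.mp h40 with h | h
    · exact absurd h hlg0
    · rcases mul_eq_zero.mp h with h | h
      · exact absurd h h4
      · rcases mul_eq_zero.mp h with h | h
        · exact absurd h ha
        · exact h
  have hγ : γ₁ = γ₂ := by
    have h0 := hfeq 0
    rw [hc1] at h0
    linear_combination h0
  have hlead : lf = lg * a ^ 2 := by
    have h1 := hfeq 1
    rw [hc1] at h1
    linear_combination h1 - hγ
  rcases hlf with rfl | rfl <;> rcases hlg with rfl | rfl
  · exact hfg (by funext x; rw [hγ])
  · exact hα ⟨a⁻¹, by field_simp; linear_combination -hlead⟩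
  · exact hα ⟨a, by linear_combination hlead⟩
  · exact hfg (by funext x; rw [hγ])

/-- Case I'' : a = 0, e = 0 (so b ≠ 0, d ≠ 0). -/
lemma bpf_caseI'' (hp : 97 ≤ p) (lf lg γ₁ γ₂ b d c1 c2 : ZMod p)
    (hlf0 : lf ≠ 0) (hlg0 : lg ≠ 0) (hb : b ≠ 0) (hd : d ≠ 0)
    (hstar : ∀ x j : ZMod p, j.val < (lf * x ^ 2 + γ₁).val ↔
      (d * x + c2).val < (lg * (b * j + c1) ^ 2 + γ₂).val) : False := by
  set h : ℕ → ℕ := fun cc =>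
    (univ.filter fun j : ZMod p => cc < (lg * (b * j + c1) ^ 2 + γ₂).val).card with hdef
  have step1 : ∀ x : ZMod p, (lf * x ^ 2 + γ₁).val = h ((d * x + c2).val) := by
    intro x
    have hsets : (univ.filter fun j : ZMod p => j.val < (lf * x ^ 2 + γ₁).val)
        = (univ.filter fun j : ZMod p =>
            (d * x + c2).val < (lg * (b * j + c1) ^ 2 + γ₂).val) := by
      apply Finset.filter_congr
      intro j _
      exact hstar x j
    rw [hdef]
    rw [← bpf_card_val_lt ((lf * x ^ 2 + γ₁).val) (le_of_lt (ZMod.val_lt _)), hsets]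
  have hcast : ∀ cc : ℕ, cc < p → ((h cc : ℕ) : ZMod p) =
      (lf * (d⁻¹) ^ 2) * (cc : ZMod p) ^ 2 + (-(2 * lf * (d⁻¹) ^ 2 * c2)) * (cc : ZMod p)
        + (lf * (d⁻¹) ^ 2 * c2 ^ 2 + γ₁) := by
    intro cc hcc
    have hx : d * (((cc : ZMod p) - c2) * d⁻¹) + c2 = (cc : ZMod p) := by field_simp; ring
    have h1 := step1 ((((cc : ZMod p)) - c2) * d⁻¹)
    rw [hx, ZMod.val_cast_of_lt hcc] at h1
    rw [← h1, ZMod.natCast_val, ZMod.cast_id]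
    ring
  have hmono : ∀ cc : ℕ, cc + 1 < p → h (cc + 1) ≤ h cc ∧ h cc ≤ h (cc + 1) + 2 := by
    intro cc hcc
    have hsub1 : (univ.filter fun j : ZMod p => cc + 1 < (lg * (b * j + c1) ^ 2 + γ₂).val)
        ⊆ (univ.filter fun j : ZMod p => cc < (lg * (b * j + c1) ^ 2 + γ₂).val) := by
      intro j hj
      simp only [mem_filter, mem_univ, true_and] at hj ⊢
      omega
    constructor
    · exact Finset.card_le_card hsub1
    · have hsub : (univ.filter fun j : ZMod p => cc < (lg * (b * j + c1) ^ 2 + γ₂).val)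
          ⊆ (univ.filter fun j : ZMod p => cc + 1 < (lg * (b * j + c1) ^ 2 + γ₂).val)
            ∪ (univ.filter fun j : ZMod p =>
                lg * (b * j + c1) ^ 2 + γ₂ = ((cc + 1 : ℕ) : ZMod p)) := by
        intro j hj
        simp only [mem_filter, mem_univ, true_and, mem_union] at hj ⊢
        rcases Nat.lt_or_ge (cc + 1) ((lg * (b * j + c1) ^ 2 + γ₂).val) with h' | h'
        · exact Or.inl h'
        · right
          apply ZMod.val_injective
          rw [ZMod.val_cast_of_lt hcc]
          omega
      have hq : (univ.filter fun j : ZMod p =>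
          lg * (b * j + c1) ^ 2 + γ₂ = ((cc + 1 : ℕ) : ZMod p)).card ≤ 2 := by
        apply bpf_quad_preimage (lg * b ^ 2) (2 * lg * b * c1) (lg * c1 ^ 2 + γ₂)
          _ (mul_ne_zero hlg0 (pow_ne_zero _ hb))
        intro z; ring
      have hle := (Finset.card_le_card hsub).trans (Finset.card_union_le _ _)
      have hrw : (univ.filter fun j : ZMod p =>
          cc + 1 < (lg * (b * j + c1) ^ 2 + γ₂).val).card = h (cc + 1) := rfl
      have hrw2 : (univ.filter fun j : ZMod p =>
          cc < (lg * (b * j + c1) ^ 2 + γ₂).val).card = h cc := rfl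
      rw [hrw, hrw2] at hle
      omega
  exact bpf_lemS hp _ _ _
    (mul_ne_zero hlf0 (pow_ne_zero _ (inv_ne_zero hd))) h hcast hmono

end more2
section more3
variable {p : ℕ} [Fact p.Prime]
open Finset

lemma bpf_three_ne (hp : 97 ≤ p) : (3 : ZMod p) ≠ 0 := by
  have h2 : ((3 : ℕ) : ZMod p).val = 3 := ZMod.val_cast_of_lt (by omega)
  intro h
  rw [show ((3:ℕ) : ZMod p) = (3 : ZMod p) by push_cast; ring, h, ZMod.val_zero] at h2
  omega

/-- Case III.2 : a ≠ 0, d = 0, b ≠ 0. -/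
lemma bpf_caseIII2 (hp : 97 ≤ p) (lf lg γ₁ γ₂ a b e c1 c2 : ZMod p)
    (hlf0 : lf ≠ 0) (ha : a ≠ 0) (hb : b ≠ 0)
    (hstar : ∀ x j : ZMod p, j.val < (lf * x ^ 2 + γ₁).val ↔
      (e * j + c2).val < (lg * (a * x + b * j + c1) ^ 2 + γ₂).val) : False := by
  have h2ne : (2 : ZMod p) ≠ 0 := bpf_two_ne hp
  have h3ne : (3 : ZMod p) ≠ 0 := bpf_three_ne hp
  have h4ne : (4 : ZMod p) ≠ 0 := bpf_four_ne hp
  have key : ∀ m : ℕ, m < p → (∃ x0 : ZMod p, (lf * x0 ^ 2 + γ₁).val = m) →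
      (∃ x1 : ZMod p, m < (lf * x1 ^ 2 + γ₁).val) → b * (m : ZMod p) + c1 = 0 := by
    intro m hm hx0e hx1e
    obtain ⟨x0, hx0⟩ := hx0e
    obtain ⟨x1, hx1⟩ := hx1e
    by_contra hbc
    have hjval : ((m : ZMod p)).val = m := ZMod.val_cast_of_lt hm
    have hτ : 2 * (b * (m : ZMod p) + c1) * a⁻¹ ≠ 0 :=
      mul_ne_zero (mul_ne_zero h2ne hbc) (inv_ne_zero ha)
    have hshift : ∀ x : ZMod p, (m < (lf * x ^ 2 + γ₁).val) ↔
        (m < (lf * (x + 2 * (b * (m : ZMod p) + c1) * a⁻¹) ^ 2 + γ₁).val) := by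
      intro x
      have h1 := hstar x ((m : ZMod p))
      have h2' := hstar (-x - 2 * (b * (m : ZMod p) + c1) * a⁻¹) ((m : ZMod p))
      rw [hjval] at h1 h2'
      have harg : a * (-x - 2 * (b * (m : ZMod p) + c1) * a⁻¹) + b * (m : ZMod p) + c1
          = -(a * x + b * (m : ZMod p) + c1) := by
        field_simp; ring
      rw [harg] at h2'
      rw [show lg * (-(a * x + b * (m : ZMod p) + c1)) ^ 2 + γ₂
          = lg * (a * x + b * (m : ZMod p) + c1) ^ 2 + γ₂ by ring] at h2'
      rw [show lf * (-x - 2 * (b * (m : ZMod p) + c1) * a⁻¹) ^ 2 + γ₁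
          = lf * (x + 2 * (b * (m : ZMod p) + c1) * a⁻¹) ^ 2 + γ₁ by ring] at h2'
      exact h1.trans h2'.symm
    have hall := bpf_shift _ hτ hshift x1 hx1
    have hc := hall x0
    omega
  have final : ∀ m m' : ℕ, m < p → m' < p → b * (m : ZMod p) + c1 = 0 →
      b * ((m' : ℕ) : ZMod p) + c1 = 0 → m = m' := by
    intro m m' hm hm' h1 h2'
    have hbm : b * ((m : ZMod p) - (m' : ZMod p)) = 0 := by linear_combination h1 - h2'
    rcases mul_eq_zero.mp hbm with h | h
    · exact absurd h hb
    · have heq : (m : ZMod p) = (m' : ZMod p) := sub_eq_zero.mp h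
      calc m = ((m : ZMod p)).val := (ZMod.val_cast_of_lt hm).symm
        _ = (((m' : ℕ) : ZMod p)).val := by rw [heq]
        _ = m' := ZMod.val_cast_of_lt hm'
  have hd01 : (lf * (0:ZMod p) ^ 2 + γ₁).val ≠ (lf * (1:ZMod p) ^ 2 + γ₁).val := by
    intro h
    have heq := ZMod.val_injective p h
    exact hlf0 (by linear_combination -heq)
  have hd02 : (lf * (0:ZMod p) ^ 2 + γ₁).val ≠ (lf * (2:ZMod p) ^ 2 + γ₁).val := by
    intro h
    have heq := ZMod.val_injective p h
    have h40 : (4 : ZMod p) * lf = 0 := by linear_combination -heq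
    rcases mul_eq_zero.mp h40 with h' | h'
    · exact h4ne h'
    · exact hlf0 h'
  have hd12 : (lf * (1:ZMod p) ^ 2 + γ₁).val ≠ (lf * (2:ZMod p) ^ 2 + γ₁).val := by
    intro h
    have heq := ZMod.val_injective p h
    have h30 : (3 : ZMod p) * lf = 0 := by linear_combination -heq
    rcases mul_eq_zero.mp h30 with h' | h'
    · exact h3ne h'
    · exact hlf0 h'
  have hne : (univ.image fun x : ZMod p => (lf * x ^ 2 + γ₁).val).Nonempty :=
    ⟨_, mem_image_of_mem _ (mem_univ (0 : ZMod p))⟩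
  set N := (univ.image fun x : ZMod p => (lf * x ^ 2 + γ₁).val).max' hne with hN
  have hub : ∀ x : ZMod p, (lf * x ^ 2 + γ₁).val ≤ N := by
    intro x
    apply Finset.le_max'
    exact mem_image_of_mem _ (mem_univ x)
  obtain ⟨xN, -, hxN⟩ := Finset.mem_image.mp (Finset.max'_mem _ hne)
  have pairkill : ∀ (xi xj : ZMod p),
      (lf * xi ^ 2 + γ₁).val ≠ (lf * xj ^ 2 + γ₁).val →
      (lf * xi ^ 2 + γ₁).val < N → (lf * xj ^ 2 + γ₁).val < N → False := by
    intro xi xj hij hi hj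
    apply hij
    apply final _ _ (ZMod.val_lt _) (ZMod.val_lt _)
    · exact key _ (ZMod.val_lt _) ⟨xi, rfl⟩ ⟨xN, by rw [hxN]; exact hi⟩
    · exact key _ (ZMod.val_lt _) ⟨xj, rfl⟩ ⟨xN, by rw [hxN]; exact hj⟩
  have h0 := hub 0
  have h1 := hub 1
  have h2 := hub 2
  rcases show ((lf * (0:ZMod p) ^ 2 + γ₁).val < N ∧ (lf * (1:ZMod p) ^ 2 + γ₁).val < N)
      ∨ ((lf * (0:ZMod p) ^ 2 + γ₁).val < N ∧ (lf * (2:ZMod p) ^ 2 + γ₁).val < N)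
      ∨ ((lf * (1:ZMod p) ^ 2 + γ₁).val < N ∧ (lf * (2:ZMod p) ^ 2 + γ₁).val < N) by omega
    with ⟨hu, hv⟩ | ⟨hu, hv⟩ | ⟨hu, hv⟩
  · exact pairkill 0 1 hd01 hu hv
  · exact pairkill 0 2 hd02 hu hv
  · exact pairkill 1 2 hd12 hu hv

end more3
/-- For `p ≥ 97` prime and `α` a fixed non-square, the `2p` sets of points below the
parabolas `Y = X² + γ` and `Y = αX² + γ` (for `γ ∈ F_p`) are pairwise non-isomorphic
under affine transformations of the plane. -/
theorem below_parabola_family_nonisomorphic (p : ℕ) [Fact p.Prime] (hp : 97 ≤ p)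
    (α : ZMod p) (hα : ¬ IsSquare α)
    (f g : ZMod p → ZMod p)
    (hf : (∃ γ : ZMod p, f = fun x => x ^ 2 + γ) ∨
          (∃ γ : ZMod p, f = fun x => α * x ^ 2 + γ))
    (hg : (∃ γ : ZMod p, g = fun x => x ^ 2 + γ) ∨
          (∃ γ : ZMod p, g = fun x => α * x ^ 2 + γ))
    (hfg : f ≠ g) :
    ¬ ∃ (A : GL (Fin 2) (ZMod p)) (c : Fin 2 → ZMod p),
      (fun v : Fin 2 → ZMod p => (A : Matrix (Fin 2) (Fin 2) (ZMod p)).mulVec v + c) ''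
          {v : Fin 2 → ZMod p | (v 1).val < (f (v 0)).val} =
        {v : Fin 2 → ZMod p | (v 1).val < (g (v 0)).val} := by
  rintro ⟨A, c, hT⟩
  have hf' : ∃ lf γ₁ : ZMod p, (lf = 1 ∨ lf = α) ∧ f = fun x => lf * x ^ 2 + γ₁ := by
    rcases hf with ⟨γ, hγ⟩ | ⟨γ, hγ⟩
    · exact ⟨1, γ, Or.inl rfl, by rw [hγ]; funext x; ring⟩
    · exact ⟨α, γ, Or.inr rfl, hγ⟩
  obtain ⟨lf, γ₁, hlf, rfl⟩ := hf'
  have hg' : ∃ lg γ₂ : ZMod p, (lg = 1 ∨ lg = α) ∧ g = fun x => lg * x ^ 2 + γ₂ := by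
    rcases hg with ⟨γ, hγ⟩ | ⟨γ, hγ⟩
    · exact ⟨1, γ, Or.inl rfl, by rw [hγ]; funext x; ring⟩
    · exact ⟨α, γ, Or.inr rfl, hγ⟩
  obtain ⟨lg, γ₂, hlg, rfl⟩ := hg'
  have hα0 : α ≠ 0 := fun h => hα (h ▸ ⟨0, by ring⟩)
  have hlf0 : lf ≠ 0 := by rcases hlf with rfl | rfl; exacts [one_ne_zero, hα0]
  have hlg0 : lg ≠ 0 := by rcases hlg with rfl | rfl; exacts [one_ne_zero, hα0]
  set M : Matrix (Fin 2) (Fin 2) (ZMod p) := ↑A with hM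
  have hAinv : (↑A⁻¹ : Matrix (Fin 2) (Fin 2) (ZMod p)) * M = 1 := by
    rw [hM]; exact A.inv_mul
  have hinj : ∀ u v : Fin 2 → ZMod p, M.mulVec u + c = M.mulVec v + c → u = v := by
    intro u v huv
    have h2 : M.mulVec u = M.mulVec v := by
      have := congrArg (fun w => w - c) huv; simpa using this
    have h4 : ((↑A⁻¹ : Matrix (Fin 2) (Fin 2) (ZMod p)) * M).mulVec u
        = ((↑A⁻¹ : Matrix (Fin 2) (Fin 2) (ZMod p)) * M).mulVec v := by
      rw [← Matrix.mulVec_mulVec, ← Matrix.mulVec_mulVec, h2]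
    rwa [hAinv, Matrix.one_mulVec, Matrix.one_mulVec] at h4
  have hiff : ∀ v : Fin 2 → ZMod p,
      ((v 1).val < (lf * (v 0) ^ 2 + γ₁).val) ↔
      (((M.mulVec v + c) 1).val < (lg * ((M.mulVec v + c) 0) ^ 2 + γ₂).val) := by
    intro v
    constructor
    · intro hv
      have hmem : (M.mulVec v + c) ∈ {w : Fin 2 → ZMod p |
          (w 1).val < ((fun x => lg * x ^ 2 + γ₂) (w 0)).val} := by
        rw [← hT]
        exact ⟨v, hv, rfl⟩
      exact hmem
    · intro hv
      have hmem : (M.mulVec v + c) ∈ {w : Fin 2 → ZMod p |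
          (w 1).val < ((fun x => lg * x ^ 2 + γ₂) (w 0)).val} := hv
      rw [← hT] at hmem
      obtain ⟨u, hu, heq⟩ := hmem
      have huv := hinj u v heq
      exact huv ▸ hu
  have hstar : ∀ x j : ZMod p, j.val < (lf * x ^ 2 + γ₁).val ↔
      (M 1 0 * x + M 1 1 * j + c 1).val
        < (lg * (M 0 0 * x + M 0 1 * j + c 0) ^ 2 + γ₂).val := by
    intro x j
    have h := hiff ![x, j]
    have e0 : (M.mulVec ![x, j] + c) 0 = M 0 0 * x + M 0 1 * j + c 0 := by
      simp [Matrix.mulVec, dotProduct, Fin.sum_univ_two]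
    have e1 : (M.mulVec ![x, j] + c) 1 = M 1 0 * x + M 1 1 * j + c 1 := by
      simp [Matrix.mulVec, dotProduct, Fin.sum_univ_two]
    rw [e0, e1] at h
    simpa using h
  have hdet : M 0 0 * M 1 1 - M 0 1 * M 1 0 ≠ 0 := by
    have h1 : M.det * (↑A⁻¹ : Matrix (Fin 2) (Fin 2) (ZMod p)).det = 1 := by
      rw [← Matrix.det_mul, hM, Units.mul_inv]
      exact Matrix.det_one
    intro h0
    rw [Matrix.det_fin_two, h0, zero_mul] at h1
    exact zero_ne_one h1
  by_cases hb : M 0 1 = 0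
  · have ha : M 0 0 ≠ 0 := by intro h; apply hdet; rw [h, hb]; ring
    have he : M 1 1 ≠ 0 := by intro h; apply hdet; rw [h, hb]; ring
    apply bpf_caseIII1 hp α hα lf lg γ₁ γ₂ (M 0 0) (M 1 0) (M 1 1) (c 0) (c 1)
      hlf hlg ha he ?_ hfg
    intro x j
    have h := hstar x j
    rw [hb, show M 0 0 * x + 0 * j + c 0 = M 0 0 * x + c 0 by ring] at h
    exact h
  · by_cases haz : M 0 0 = 0
    · have hd : M 1 0 ≠ 0 := by intro h; apply hdet; rw [haz, h]; ring
      by_cases hez : M 1 1 = 0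
      · apply bpf_caseI'' hp lf lg γ₁ γ₂ (M 0 1) (M 1 0) (c 0) (c 1) hlf0 hlg0 hb hd
        intro x j
        have h := hstar x j
        rw [haz, hez, show M 1 0 * x + 0 * j + c 1 = M 1 0 * x + c 1 by ring,
          show (0 : ZMod p) * x + M 0 1 * j + c 0 = M 0 1 * j + c 0 by ring] at h
        exact h
      · apply bpf_caseI' hp lf lg γ₁ γ₂ (M 0 1) (M 1 0) (M 1 1) (c 0) (c 1) hlf0 hd hez
        intro x j
        have h := hstar x j
        rw [haz, show (0 : ZMod p) * x + M 0 1 * j + c 0 = M 0 1 * j + c 0 by ring] at h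
        exact h
    · by_cases hdz : M 1 0 = 0
      · apply bpf_caseIII2 hp lf lg γ₁ γ₂ (M 0 0) (M 0 1) (M 1 1) (c 0) (c 1) hlf0 haz hb
        intro x j
        have h := hstar x j
        rw [hdz, show (0 : ZMod p) * x + M 1 1 * j + c 1 = M 1 1 * j + c 1 by ring] at h
        exact h
      · exact bpf_caseII hp lf lg γ₁ γ₂ (M 0 0) (M 0 1) (M 1 0) (M 1 1) (c 0) (c 1)
          hlg0 haz hdz hstar
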